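/- For every k ∈ ℂ with Im k > 0, one has ξ(k) = 1 if and only if k = i·√(a² − (πm/b)²) for some integer m with 0 ≤ m < ab/π. (These are exactly the points of the open upper half-plane at which the numerator 1 − ξ of the block reflection coefficient R⁰ = ω²(1 − ξ)/(ξ − ω⁴) vanishes.) -/

import Mathlib

open Complex

/-- `ω(k) = k/a + ((k/a)² + 1)^{1/2}` with the principal branch of the square root. -/
noncomputable def omg (a : ℝ) (k : ℂ) : ℂ :=
  k / (a : ℂ) + ((k / (a : ℂ)) ^ 2 + 1) ^ ((1 : ℂ) / 2)

/-- `ξ(k) = exp(i·a·b·(ω(k) + 1/ω(k)))`. -/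
noncomputable def xi (a b : ℝ) (k : ℂ) : ℂ :=
  Complex.exp (Complex.I * (a : ℂ) * (b : ℂ) * (omg a k + 1 / omg a k))

/-- Right reflection coefficient of the block potential `−a²·χ_{[−b,0]}`. -/
noncomputable def Rcoef (a b : ℝ) (k : ℂ) : ℂ :=
  omg a k ^ 2 * (1 - xi a b k) / (xi a b k - omg a k ^ 4)

/-- Left reflection coefficient of the block potential `−a²·χ_{[−b,0]}`. -/
noncomputable def Lcoef (a b : ℝ) (k : ℂ) : ℂ :=
  Rcoef a b k * Complex.exp (-Complex.I * (a : ℂ) * (b : ℂ) * (omg a k - 1 / omg a k))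

/-- Transmission coefficient of the block potential `−a²·χ_{[−b,0]}`. -/
noncomputable def Tcoef (a b : ℝ) (k : ℂ) : ℂ :=
  (1 - omg a k ^ 4) / (xi a b k - omg a k ^ 4) * Complex.exp (Complex.I * (a : ℂ) * (b : ℂ) / omg a k)

/-- The block (well) potential `V = −a²·χ_{[−b,0]}`, complex-valued. -/
noncomputable def Vblock (a b : ℝ) (x : ℝ) : ℂ :=
  if -b ≤ x ∧ x ≤ 0 then -(a : ℂ) ^ 2 else 0

/-- In the open upper half-plane, `ξ(k) = 1` iff `k = i·√(a² − (πm/b)²)` for some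
integer `m` with `0 ≤ m < ab/π`. -/
lemma cpow_half_sq (z : ℂ) : (z ^ ((1:ℂ)/2)) ^ 2 = z := by
  by_cases hz : z = 0
  · simp [hz, Complex.zero_cpow (by norm_num : ((1:ℂ)/2) ≠ 0)]
  · rw [sq, ← Complex.cpow_add _ _ hz]
    norm_num

lemma cpow_half_real_sq (r : ℝ) (hr : 0 ≤ r) : (((r:ℂ)^2)) ^ ((1:ℂ)/2) = r := by
  have h : ((r:ℂ)^2) = ((r^2 : ℝ) : ℂ) := by push_cast; ring
  have h2 : ((1:ℂ)/2) = (((1/2 : ℝ)):ℂ) := by norm_num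
  rw [h, h2, ← Complex.ofReal_cpow (by positivity), ← Real.sqrt_eq_rpow, Real.sqrt_sq hr]

theorem xi_eq_one_iff (a b : ℝ) (ha : 0 < a) (hb : 0 < b) (k : ℂ) (hk : 0 < k.im) :
    xi a b k = 1 ↔
      ∃ m : ℤ, 0 ≤ m ∧ (m : ℝ) < a * b / Real.pi ∧
        k = Complex.I * (Real.sqrt (a ^ 2 - (Real.pi * m / b) ^ 2) : ℝ) := by
  have ha' : (a:ℂ) ≠ 0 := by exact_mod_cast ha.ne'
  have hb' : (b:ℂ) ≠ 0 := by exact_mod_cast hb.ne'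
  have hpi : (0:ℝ) < Real.pi := Real.pi_pos
  set z : ℂ := (k / (a:ℂ)) ^ 2 + 1 with hz
  set s : ℂ := z ^ ((1:ℂ)/2) with hs
  have hs2 : s ^ 2 = z := cpow_half_sq z
  have hωne : omg a k ≠ 0 := by
    intro h
    have h1 : k / ↑a + s = 0 := h
    have h2 : s ^ 2 = (k / ↑a) ^ 2 := by linear_combination (s - k / ↑a) * h1
    have hz2 : s ^ 2 = (k / ↑a) ^ 2 + 1 := hs2
    exact one_ne_zero (by linear_combination h2 - hz2 : (1:ℂ) = 0)
  have hsum : omg a k + 1 / omg a k = 2 * s := by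
    have hinv : 1 / omg a k = s - k / a := by
      rw [eq_comm, eq_div_iff hωne]
      have h3 : omg a k = k / a + s := rfl
      rw [h3]
      linear_combination hs2
    rw [hinv]
    show k / a + s + (s - k/a) = 2*s
    ring
  have hxi : xi a b k = Complex.exp (Complex.I * a * b * (2*s)) := by
    rw [xi, hsum]
  rw [hxi, Complex.exp_eq_one_iff]
  constructor
  · rintro ⟨n, hn⟩
    set r : ℝ := Real.pi * n / (a*b) with hr
    have hsr : s = (r:ℂ) := by
      have hab : ((a:ℂ)*b) ≠ 0 := mul_ne_zero ha' hb'
      rw [hr]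
      push_cast
      rw [eq_div_iff hab]
      linear_combination (-Complex.I/2) * hn + ((a:ℂ)*b*s - Real.pi * n) * Complex.I_sq
    have hzr : z = ((r:ℂ))^2 := by rw [← hs2, hsr]
    -- r ≥ 0, hence n ≥ 0
    have habsr : s = ((|r| : ℝ) : ℂ) := by
      have h4 : ((r:ℂ))^2 = (((|r|:ℝ):ℂ))^2 := by
        norm_cast
        exact (_root_.sq_abs r).symm
      rw [hs, hzr, h4, cpow_half_real_sq |r| (abs_nonneg r)]
    have hr0 : 0 ≤ r := by
      have : (|r| : ℝ) = r := by exact_mod_cast habsr.symm.trans hsr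
      rw [← this]; exact abs_nonneg r
    have hn0 : (0:ℤ) ≤ n := by
      by_contra hneg
      push_neg at hneg
      have : r < 0 := by
        rw [hr]
        apply div_neg_of_neg_of_pos
        · exact mul_neg_of_pos_of_neg hpi (by exact_mod_cast hneg)
        · positivity
      linarith
    -- k^2 is real
    have hk2 : k ^ 2 = (((Real.pi * n / b) ^ 2 - a ^ 2 : ℝ) : ℂ) := by
      have hzz : (k / ↑a) ^ 2 + 1 = ((r:ℂ))^2 := by rw [← hz, hzr]
      have hk2' : k ^ 2 = (↑a:ℂ)^2 * (r:ℂ)^2 - (↑a:ℂ)^2 := by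
        field_simp at hzz
        linear_combination hzz
      have hra : (r:ℂ) * ↑a = ↑Real.pi * ↑n / ↑b := by
        rw [hr]; push_cast; field_simp
      push_cast
      rw [hk2', show ((a:ℂ))^2 * (r:ℂ)^2 = ((r:ℂ) * ↑a)^2 by ring, hra]
    have hre : k.re = 0 := by
      have him : (k ^ 2).im = 0 := by rw [hk2]; exact Complex.ofReal_im _
      rw [sq, Complex.mul_im] at him
      have : k.re * k.im = 0 := by linarith
      rcases mul_eq_zero.mp this with h | h
      · exact h
      · exact absurd h hk.ne'
    have hkim : k = Complex.I * (k.im : ℂ) := by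
      apply Complex.ext <;> simp [hre]
    -- the real equation
    have hyeq : k.im ^ 2 = a ^ 2 - (Real.pi * n / b) ^ 2 := by
      have : ((k.im:ℂ))^2 = ((a ^ 2 - (Real.pi * n / b) ^ 2 : ℝ) : ℂ) := by
        have h5 : (Complex.I * (k.im : ℂ))^2 = (((Real.pi * n / b) ^ 2 - a ^ 2 : ℝ) : ℂ) := by
          rw [← hkim]; exact hk2
        push_cast at h5 ⊢
        linear_combination -h5 + ((k.im:ℂ))^2 * Complex.I_sq
      exact_mod_cast this
    have hpos : 0 < a ^ 2 - (Real.pi * n / b) ^ 2 := by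
      rw [← hyeq]; positivity
    refine ⟨n, hn0, ?_, ?_⟩
    · have hnn : 0 ≤ Real.pi * n / b := by positivity
      have hx : Real.pi * n / b < a := by nlinarith
      have hx2 : Real.pi * n < a * b := (div_lt_iff₀ hb).mp hx
      rw [lt_div_iff₀ hpi]
      linarith
    · rw [hkim]
      congr 1
      rw [show a ^ 2 - (Real.pi * ↑n / b) ^ 2 = k.im ^ 2 by linarith [hyeq]]
      rw [Real.sqrt_sq hk.le]
  · rintro ⟨m, hm0, hm1, hk'⟩
    refine ⟨m, ?_⟩
    set c : ℝ := a ^ 2 - (Real.pi * m / b) ^ 2 with hc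
    have hmb : 0 ≤ Real.pi * m / b := by positivity
    have hmlt : Real.pi * m / b < a := by
      rw [div_lt_iff₀ hb]
      rw [lt_div_iff₀ hpi] at hm1
      linarith
    have hcpos : 0 < c := by
      rw [hc]
      nlinarith [mul_pos (sub_pos.mpr hmlt) (by positivity : (0:ℝ) < a + Real.pi * m / b)]
    have ht2 : Real.sqrt c ^ 2 = c := Real.sq_sqrt hcpos.le
    set r : ℝ := Real.pi * m / (a*b) with hr
    have hr0 : 0 ≤ r := by positivity
    have hzr : z = ((r:ℂ))^2 := by
      rw [hz, hk']
      have hsq : ((Real.sqrt c : ℝ):ℂ)^2 = (c:ℂ) := by exact_mod_cast ht2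
      have hcC : (c:ℂ) = (a:ℂ)^2 - ((Real.pi:ℂ) * (m:ℂ) / (b:ℂ))^2 := by
        rw [hc]; push_cast; ring
      have h6 : (Complex.I * ((Real.sqrt c : ℝ):ℂ) / (a:ℂ))^2 + 1 = 1 - (c:ℂ)/((a:ℂ))^2 := by
        rw [div_pow, mul_pow, Complex.I_sq, hsq]; ring
      rw [h6, hcC, hr]
      push_cast
      field_simp
      ring
    have hsr : s = (r:ℂ) := by rw [hs, hzr, cpow_half_real_sq r hr0]
    rw [hsr, hr]
    push_cast
    field_simp
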